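/- Let θ be a linear order on ℤ satisfying both θ = θ+2 (i.e., a ≺_θ b iff a+2 ≺_θ b+2) and the reflection condition a ≺_θ b iff -b-1 ≺_θ -a-1. Then either both the odd and the even integers appear monotonically increasing in θ (a ≺_θ b for all a<b of equal parity), or both appear monotonically decreasing (b ≺_θ a for all a<b of equal parity). -/

import Mathlib

private lemma chain_aux (r : ℤ → ℤ → Prop) (htr : Transitive r)
    (hstep : ∀ a : ℤ, r a (a + 2)) :
    ∀ a b : ℤ, a < b → a % 2 = b % 2 → r a b := by
  have key : ∀ n : ℕ, ∀ a : ℤ, r a (a + 2 * (n + 1)) := by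
    intro n
    induction n with
    | zero => intro a; simpa using hstep a
    | succ k ih =>
      intro a
      have h1 := ih a
      have h2 := hstep (a + 2 * (k + 1))
      have h3 := htr h1 h2
      have : a + 2 * ((k : ℤ) + 1) + 2 = a + 2 * ((k : ℤ) + 1 + 1) := by ring
      rw [this] at h3
      simpa using h3
  intro a b hab hpar
  have hdvd : (b - a) % 2 = 0 := by omega
  obtain ⟨m, hm⟩ : ∃ m : ℤ, b - a = 2 * m := ⟨(b - a) / 2, by omega⟩
  have hmpos : 0 < m := by omega
  obtain ⟨n, hn⟩ : ∃ n : ℕ, m = (n : ℤ) + 1 :=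
    ⟨(m - 1).toNat, by omega⟩
  have := key n a
  have hb : b = a + 2 * ((n : ℤ) + 1) := by omega
  rwa [hb]

theorem stmt_2 (r : ℤ → ℤ → Prop) (h : IsStrictTotalOrder ℤ r)
    (hshift : ∀ a b : ℤ, r a b ↔ r (a + 2) (b + 2))
    (hrefl : ∀ a b : ℤ, r a b ↔ r (-b - 1) (-a - 1)) :
    (∀ a b : ℤ, a < b → a % 2 = b % 2 → r a b) ∨
    (∀ a b : ℤ, a < b → a % 2 = b % 2 → r b a) := by
  have shiftn : ∀ (n : ℤ) (a b : ℤ), r a b → r (a + 2 * n) (b + 2 * n) := by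
    intro n
    induction n using Int.induction_on with
    | zero => intro a b hab; simpa using hab
    | succ k ih =>
      intro a b hab
      have h1 := (hshift (a + 2 * k) (b + 2 * k)).mp (ih a b hab)
      have e1 : a + 2 * (k : ℤ) + 2 = a + 2 * ((k : ℤ) + 1) := by ring
      have e2 : b + 2 * (k : ℤ) + 2 = b + 2 * ((k : ℤ) + 1) := by ring
      rwa [e1, e2] at h1
    | pred k ih =>
      intro a b hab
      have h1 := ih a b hab
      have e1 : a + 2 * (-(k : ℤ)) = a + 2 * (-(k : ℤ) - 1) + 2 := by ring
      have e2 : b + 2 * (-(k : ℤ)) = b + 2 * (-(k : ℤ) - 1) + 2 := by ring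
      rw [e1, e2] at h1
      exact (hshift _ _).mpr h1
  have htr : Transitive r := h.trans
  have tri : ∀ a b : ℤ, r a b ∨ a = b ∨ r b a := fun a b => by
    by_cases h1 : r a b
    · exact Or.inl h1
    by_cases h2 : r b a
    · exact Or.inr (Or.inr h2)
    exact Or.inr (Or.inl (h.trichotomous a b h1 h2))
  rcases tri 0 2 with h02 | heq | h20
  · left
    apply chain_aux r htr
    intro a
    rcases Int.even_or_odd a with ⟨k, hk⟩ | ⟨k, hk⟩
    · have := shiftn k 0 2 h02
      have e : a = 0 + 2 * k ∧ a + 2 = 2 + 2 * k := by constructor <;> omega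
      rw [← e.1, ← e.2] at this; exact this
    · have hodd : r (-3) (-1) := by
        have := (hrefl 0 2).mp h02
        norm_num at this
        exact this
      have := shiftn (k + 2) (-3) (-1) hodd
      have e : a = -3 + 2 * (k + 2) ∧ a + 2 = -1 + 2 * (k + 2) := by
        constructor <;> omega
      rw [← e.1, ← e.2] at this; exact this
  · omega
  · right
    have aux := chain_aux (fun a b => r b a) (fun a b c hab hbc => htr hbc hab) ?_
    · intro a b hab hpar
      exact aux a b hab hpar
    · intro a
      rcases Int.even_or_odd a with ⟨k, hk⟩ | ⟨k, hk⟩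
      · have := shiftn k 2 0 h20
        have e : a = 0 + 2 * k ∧ a + 2 = 2 + 2 * k := by constructor <;> omega
        rw [← e.1, ← e.2] at this; exact this
      · have hodd : r (-1) (-3) := by
          have := (hrefl 2 0).mp h20
          norm_num at this
          exact this
        have := shiftn (k + 2) (-1) (-3) hodd
        have e : a = -3 + 2 * (k + 2) ∧ a + 2 = -1 + 2 * (k + 2) := by
          constructor <;> omega
        rw [← e.1, ← e.2] at this; exact this
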